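/- Let a ∈ (0,1] and θ ∈ [−2a, 2a], and define, for x ∈ (0,1] and y ∈ [0,1], c(x,y) = 1 + (θ/(2a)) x^{1/a − 1} (2y − 1) sign(1/2 − x^{1/a}). Then c is a copula density; moreover, if |θ| < 2a then c(x,y) ≥ 1 − |θ|/(2a) > 0 for all x ∈ (0,1], y ∈ [0,1], i.e. c is bounded away from zero. -/

import Mathlib

open MeasureTheory
open intervalIntegral


lemma measurable_realSign : Measurable Real.sign := by
  unfold Real.sign
  exact Measurable.ite measurableSet_Iio measurable_const
    (Measurable.ite measurableSet_Ioi measurable_const measurable_const)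

lemma abs_realSign_le (t : ℝ) : |Real.sign t| ≤ 1 := by
  rcases lt_trichotomy t 0 with h|h|h
  · simp [Real.sign_of_neg h]
  · simp [h, Real.sign_zero]
  · simp [Real.sign_of_pos h]

/-- The unit interval `[0,1]` as a subset of `ℝ`. -/
def I01 : Set ℝ := Set.Icc 0 1

/-- Lebesgue measure restricted to `[0,1]`. -/
noncomputable def μ01 : Measure ℝ := volume.restrict I01

/-- The density
`c(x,y) = 1 + (θ/(2a))·x^(1/a − 1)·(2y − 1)·sign(1/2 − x^(1/a))`. -/
noncomputable def c10 (a θ x y : ℝ) : ℝ :=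
  1 + θ / (2 * a) * x ^ (1 / a - 1) * (2 * y - 1) * Real.sign (1 / 2 - x ^ (1 / a))

noncomputable def g10 (a x : ℝ) : ℝ := x ^ (1 / a - 1) * Real.sign (1 / 2 - x ^ (1 / a))

/-- For `a ∈ (0,1]` and `θ ∈ [−2a, 2a]`, the function
`c10 a θ` is a copula density; moreover, if `|θ| < 2a` then
`c(x,y) ≥ 1 − |θ|/(2a) > 0` for all `x ∈ (0,1]`, `y ∈ [0,1]`, i.e. it is
bounded away from zero. -/
theorem c10_copula_density_bounded_below (a θ : ℝ) (ha : a ∈ Set.Ioc (0 : ℝ) 1)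
    (hθ : θ ∈ Set.Icc (-(2 * a)) (2 * a)) :
    (∀ x ∈ Set.Ioc (0 : ℝ) 1, ∀ y ∈ I01, 0 ≤ c10 a θ x y) ∧
    (∀ᵐ y ∂μ01, (∫ x in I01, c10 a θ x y) = 1) ∧
    (∀ᵐ x ∂μ01, (∫ y in I01, c10 a θ x y) = 1) ∧
    (|θ| < 2 * a →
      (∀ x ∈ Set.Ioc (0 : ℝ) 1, ∀ y ∈ I01, 1 - |θ| / (2 * a) ≤ c10 a θ x y) ∧
      0 < 1 - |θ| / (2 * a)) := by
  obtain ⟨ha0, ha1⟩ := ha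
  obtain ⟨hθl, hθr⟩ := hθ
  have h2a : (0:ℝ) < 2 * a := by linarith
  have hθabs : |θ| ≤ 2 * a := abs_le.2 ⟨hθl, hθr⟩
  have hinva : (0:ℝ) < 1 / a := by positivity
  have hp : (0:ℝ) ≤ 1 / a - 1 := by
    have : (1:ℝ) ≤ 1 / a := one_le_one_div ha0 ha1
    linarith
  -- pointwise bound
  have key : ∀ x ∈ Set.Ioc (0:ℝ) 1, ∀ y ∈ I01,
      |θ / (2 * a) * x ^ (1 / a - 1) * (2 * y - 1) * Real.sign (1 / 2 - x ^ (1 / a))|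
        ≤ |θ| / (2 * a) := by
    intro x hx y hy
    obtain ⟨hy0, hy1⟩ := hy
    have h1 : |x ^ (1 / a - 1)| ≤ 1 := by
      rw [abs_of_nonneg (Real.rpow_nonneg hx.1.le _)]
      exact Real.rpow_le_one hx.1.le hx.2 hp
    have h2 : |2 * y - 1| ≤ 1 := by
      rw [abs_le]; constructor <;> linarith
    calc |θ / (2 * a) * x ^ (1 / a - 1) * (2 * y - 1) * Real.sign (1 / 2 - x ^ (1 / a))|
        = |θ / (2 * a)| * |x ^ (1 / a - 1)| * |2 * y - 1| * |Real.sign (1 / 2 - x ^ (1 / a))| := by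
          rw [abs_mul, abs_mul, abs_mul]
      _ ≤ |θ / (2 * a)| * 1 * 1 * 1 := by
          gcongr <;> first
            | exact h1
            | exact h2
            | exact abs_realSign_le _
      _ = |θ| / (2 * a) := by rw [abs_div, abs_of_pos h2a]; ring
  have lower : ∀ x ∈ Set.Ioc (0:ℝ) 1, ∀ y ∈ I01, 1 - |θ| / (2 * a) ≤ c10 a θ x y := by
    intro x hx y hy
    have h := (abs_le.1 (key x hx y hy)).1
    unfold c10
    linarith
  have hnn : (0:ℝ) ≤ 1 - |θ| / (2 * a) := by
    have : |θ| / (2 * a) ≤ 1 := (div_le_one h2a).2 hθabs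
    linarith
  -- the x-integral of g10
  set t : ℝ := (1 / 2 : ℝ) ^ a with ht_def
  have ht0 : 0 < t := Real.rpow_pos_of_pos (by norm_num) a
  have ht1 : t < 1 := Real.rpow_lt_one (by norm_num) (by norm_num) ha0
  have htpow : t ^ (1 / a) = 1 / 2 := by
    rw [ht_def, ← Real.rpow_mul (by norm_num : (0:ℝ) ≤ 1 / 2),
      mul_one_div_cancel ha0.ne', Real.rpow_one]
  have hg_meas : Measurable (g10 a) := by
    have h1 : Measurable fun x : ℝ => x ^ (1 / a - 1) := by measurability
    have h2 : Measurable fun x : ℝ => x ^ (1 / a) := by measurability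
    unfold g10
    exact h1.mul (measurable_realSign.comp (measurable_const.sub h2))
  have hg_bound : ∀ x ∈ Set.Icc (0:ℝ) 1, |g10 a x| ≤ 1 := by
    intro x hx
    unfold g10
    rw [abs_mul]
    have h1 : |x ^ (1 / a - 1)| ≤ 1 := by
      rw [abs_of_nonneg (Real.rpow_nonneg hx.1 _)]
      exact Real.rpow_le_one hx.1 hx.2 hp
    calc |x ^ (1 / a - 1)| * |Real.sign (1 / 2 - x ^ (1 / a))| ≤ 1 * 1 :=
          mul_le_mul h1 (abs_realSign_le _) (abs_nonneg _) zero_le_one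
      _ = 1 := by ring
  have hg_int : IntervalIntegrable (g10 a) volume 0 1 := by
    rw [intervalIntegrable_iff_integrableOn_Ioc_of_le (by norm_num : (0:ℝ) ≤ 1)]
    refine Integrable.mono' (integrable_const 1) hg_meas.aestronglyMeasurable.restrict ?_
    refine (ae_restrict_iff' measurableSet_Ioc).2 (Filter.Eventually.of_forall fun x hx => ?_)
    exact hg_bound x ⟨hx.1.le, hx.2⟩
  have hne : ∀ᵐ x : ℝ ∂volume, x ≠ t := by
    simpa using measure_eq_zero_iff_ae_notMem.mp (Real.volume_singleton (a := t))
  have hI1 : ∫ x in (0:ℝ)..t, g10 a x = a / 2 := by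
    have hcong : ∫ x in (0:ℝ)..t, g10 a x = ∫ x in (0:ℝ)..t, x ^ (1 / a - 1) := by
      apply intervalIntegral.integral_congr_ae
      filter_upwards [hne] with x hxne hmem
      rw [Set.uIoc_of_le ht0.le] at hmem
      have hlt : x < t := lt_of_le_of_ne hmem.2 hxne
      have hxa : x ^ (1 / a) < 1 / 2 := by
        calc x ^ (1 / a) < t ^ (1 / a) := Real.rpow_lt_rpow hmem.1.le hlt hinva
          _ = 1 / 2 := htpow
      unfold g10
      rw [Real.sign_of_pos (by linarith), mul_one]
    rw [hcong, integral_rpow (Or.inl (by linarith))]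
    rw [sub_add_cancel, htpow, Real.zero_rpow (by positivity)]
    field_simp
    norm_num
  have hI2 : ∫ x in t..(1:ℝ), g10 a x = -(a / 2) := by
    have hcong : ∫ x in t..(1:ℝ), g10 a x = ∫ x in t..(1:ℝ), -(x ^ (1 / a - 1)) := by
      apply intervalIntegral.integral_congr_ae
      filter_upwards [] with x hmem
      rw [Set.uIoc_of_le ht1.le] at hmem
      have hxa : 1 / 2 < x ^ (1 / a) := by
        calc (1:ℝ) / 2 = t ^ (1 / a) := htpow.symm
          _ < x ^ (1 / a) := Real.rpow_lt_rpow ht0.le hmem.1 hinva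
      unfold g10
      rw [Real.sign_of_neg (by linarith)]
      ring
    rw [hcong, intervalIntegral.integral_neg, integral_rpow (Or.inl (by linarith))]
    rw [sub_add_cancel, htpow, Real.one_rpow]
    field_simp
    ring
  have hsub1 : Set.uIcc (0:ℝ) t ⊆ Set.uIcc 0 1 := by
    rw [Set.uIcc_of_le ht0.le, Set.uIcc_of_le (by norm_num : (0:ℝ) ≤ 1)]
    exact Set.Icc_subset_Icc le_rfl ht1.le
  have hsub2 : Set.uIcc t (1:ℝ) ⊆ Set.uIcc 0 1 := by
    rw [Set.uIcc_of_le ht1.le, Set.uIcc_of_le (by norm_num : (0:ℝ) ≤ 1)]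
    exact Set.Icc_subset_Icc ht0.le le_rfl
  have hg0 : ∫ x in (0:ℝ)..1, g10 a x = 0 := by
    rw [← integral_add_adjacent_intervals (hg_int.mono_set hsub1) (hg_int.mono_set hsub2),
      hI1, hI2]
    ring
  refine ⟨?_, ?_, ?_, ?_⟩
  · intro x hx y hy
    have := lower x hx y hy
    linarith
  · -- ∫ x
    refine Filter.Eventually.of_forall fun y => ?_
    have hIcc : (∫ x in I01, c10 a θ x y) = ∫ x in (0:ℝ)..1, c10 a θ x y := by
      rw [intervalIntegral.integral_of_le (by norm_num : (0:ℝ) ≤ 1)]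
      exact integral_Icc_eq_integral_Ioc
    rw [hIcc]
    have hcong : ∫ x in (0:ℝ)..1, c10 a θ x y
        = ∫ x in (0:ℝ)..1, (1 + (θ / (2 * a) * (2 * y - 1)) * g10 a x) := by
      apply integral_congr
      intro x _
      unfold c10 g10
      ring
    rw [hcong, integral_add intervalIntegrable_const (hg_int.const_mul _),
      intervalIntegral.integral_const_mul, hg0, intervalIntegral.integral_const]
    simp
  · -- ∫ y
    refine Filter.Eventually.of_forall fun x => ?_
    have hIcc : (∫ y in I01, c10 a θ x y) = ∫ y in (0:ℝ)..1, c10 a θ x y := by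
      rw [intervalIntegral.integral_of_le (by norm_num : (0:ℝ) ≤ 1)]
      exact integral_Icc_eq_integral_Ioc
    rw [hIcc]
    have h21int : IntervalIntegrable (fun y : ℝ => 2 * y - 1) volume 0 1 :=
      ((continuous_const.mul continuous_id').sub continuous_const).intervalIntegrable _ _
    have h21 : ∫ y in (0:ℝ)..1, (2 * y - 1) = 0 := by
      rw [integral_sub (f := fun y : ℝ => 2 * y) ((continuous_const.mul continuous_id').intervalIntegrable _ _)
        intervalIntegrable_const, intervalIntegral.integral_const_mul, integral_id,
        intervalIntegral.integral_const]
      norm_num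
    have hcong : ∫ y in (0:ℝ)..1, c10 a θ x y
        = ∫ y in (0:ℝ)..1,
            (1 + (θ / (2 * a) * x ^ (1 / a - 1) * Real.sign (1 / 2 - x ^ (1 / a)))
              * (2 * y - 1)) := by
      apply integral_congr
      intro y _
      unfold c10
      ring
    rw [hcong, integral_add intervalIntegrable_const (h21int.const_mul _),
      intervalIntegral.integral_const_mul, h21, intervalIntegral.integral_const]
    simp
  · intro hlt
    refine ⟨lower, ?_⟩
    have : |θ| / (2 * a) < 1 := (div_lt_one h2a).2 hlt
    linarith
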